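/- Let f : ℝ² → ℝ be a real analytic function satisfying f(p+nq, εq) = f(p,q) for all n ∈ ℤ and ε ∈ {±1}. Then f(p,q) = f(0,q) for all (p,q), and q ↦ f(0,q) is an even function. -/

import Mathlib

/-- A real analytic `G'`-invariant function on `ℝ²` depends only on `q`, and
that dependence is even. -/
theorem stmt3 (f : ℝ × ℝ → ℝ) (hf : AnalyticOnNhd ℝ f Set.univ)
    (hinv : ∀ (n : ℤ) (ε : ℝ), (ε = 1 ∨ ε = -1) →
      ∀ p q : ℝ, f (p + n * q, ε * q) = f (p, q)) :
    (∀ p q : ℝ, f (p, q) = f (0, q)) ∧ (∀ q : ℝ, f (0, -q) = f (0, q)) := by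
  constructor
  · intro p q
    rcases eq_or_ne p 0 with rfl | hp
    · rfl
    · -- analytic functions of q
      have hg : AnalyticOnNhd ℝ (fun q : ℝ => f (p, q)) Set.univ := fun x _ =>
        (hf _ (Set.mem_univ _)).comp (analyticAt_const.prod analyticAt_id)
      have hh : AnalyticOnNhd ℝ (fun q : ℝ => f (0, q)) Set.univ := fun x _ =>
        (hf _ (Set.mem_univ _)).comp (analyticAt_const.prod analyticAt_id)
      have hkey : ∀ n : ℕ, f (p, p / (n + 1)) = f (0, p / (n + 1)) := by
        intro n
        have := hinv (n + 1) 1 (Or.inl rfl) 0 (p / (n + 1))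
        have hne : ((n : ℝ) + 1) ≠ 0 := by positivity
        rw [one_mul] at this
        rw [← this]
        congr 1
        push_cast
        field_simp
        simp
      have htend : Filter.Tendsto (fun n : ℕ => p / (n + 1)) Filter.atTop (nhdsWithin 0 {(0:ℝ)}ᶜ) := by
        rw [tendsto_nhdsWithin_iff]
        constructor
        · have h1 : Filter.Tendsto (fun n : ℕ => (n : ℝ) + 1) Filter.atTop Filter.atTop :=
            Filter.tendsto_atTop_add_const_right _ 1 tendsto_natCast_atTop_atTop
          simpa using Filter.Tendsto.const_div_atTop h1 p
        · refine Filter.Eventually.of_forall fun n => ?_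
          simp only [Set.mem_compl_iff, Set.mem_singleton_iff]
          exact div_ne_zero hp (by positivity)
      have hfreq : ∃ᶠ z in nhdsWithin 0 {(0:ℝ)}ᶜ, f (p, z) = f (0, z) :=
        htend.frequently (Filter.Frequently.of_forall hkey)
      have := hg.eq_of_frequently_eq hh hfreq
      exact congrFun this q
  · intro q
    have := hinv 0 (-1) (Or.inr rfl) 0 q
    simpa using this
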